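/- Let B be a real Banach space, μ ≥ 0 a finite Borel measure on B concentrated on a σ-compact set, and p ∈ [1, ∞). Then the algebra Cyl(B) of smooth cylindrical functions on B is dense in L^p(μ) with respect to the strong (norm) topology. -/

import Mathlib

open Metric Set Filter ENNReal MeasureTheory

/-- `lipOn f E` is the Lipschitz constant (valued in `ℝ≥0∞`) of `f : X → ℝ` restricted
to the set `E ⊆ X`, namely `Lip(f; E)`. -/
noncomputable def lipOn {X : Type*} [MetricSpace X] (f : X → ℝ) (E : Set X) : ℝ≥0∞ :=
  ⨆ (x : E) (y : E), edist (f x) (f y) / edist (x : X) (y : X)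

/-- `asympSlope f x` is the asymptotic slope `lip_a(f)(x) = inf_{r>0} Lip(f; B_r(x))`. -/
noncomputable def asympSlope {X : Type*} [MetricSpace X] (f : X → ℝ) (x : X) : ℝ≥0∞ :=
  ⨅ (r : ℝ) (_ : 0 < r), lipOn f (Metric.ball x r)

/-- A smooth cylindrical function on a Banach space `B`: a function of the form `g ∘ p`
where `p : B → V` is a bounded linear operator into a finite-dimensional normed space `V`
and `g : V → ℝ` is infinitely differentiable, bounded and Lipschitz. -/
def IsCylindrical {B : Type*} [NormedAddCommGroup B] [NormedSpace ℝ B] (f : B → ℝ) : Prop :=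
  ∃ (V : Type) (_ : NormedAddCommGroup V) (_ : NormedSpace ℝ V),
    FiniteDimensional ℝ V ∧ ∃ (p : B →L[ℝ] V) (g : V → ℝ),
      ContDiff ℝ (⊤ : ℕ∞) g ∧ (∃ C, ∀ v, |g v| ≤ C) ∧ (∃ K, LipschitzWith K g) ∧ f = g ∘ p

open Manifold Topology in
/-- A smooth Urysohn-type cutoff on a finite-dimensional normed space: given a compact set
`Q` inside an open set `U`, there is a smooth compactly supported `χ` with values in `[0,1]`,
equal to `1` on `Q` and supported inside `U`. -/
lemma exists_cutoff {V : Type} [NormedAddCommGroup V] [NormedSpace ℝ V]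
    [FiniteDimensional ℝ V] {Q U : Set V} (hQ : IsCompact Q) (hU : IsOpen U)
    (hQU : Q ⊆ U) :
    ∃ χ : V → ℝ, ContDiff ℝ (⊤ : ℕ∞) χ ∧ HasCompactSupport χ ∧
      (∀ v, χ v ∈ Icc (0:ℝ) 1) ∧ (∀ v ∈ Q, χ v = 1) ∧ ∀ v, χ v ≠ 0 → v ∈ U := by
  obtain ⟨R, hR⟩ := hQ.isBounded.subset_closedBall 0
  have hQsub : Q ⊆ U ∩ Metric.ball (0:V) (R+1) := by
    intro v hv
    refine ⟨hQU hv, ?_⟩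
    have h1 : dist v 0 ≤ R := mem_closedBall.1 (hR hv)
    exact mem_ball.2 (lt_of_le_of_lt h1 (lt_add_one R))
  set s : Set V := (U ∩ Metric.ball (0:V) (R+1))ᶜ with hs_def
  have hs : IsClosed s := (hU.inter Metric.isOpen_ball).isClosed_compl
  have hd : Disjoint s Q := disjoint_compl_left.mono_right hQsub
  obtain ⟨f, hf0, hf1, hf01⟩ := exists_contMDiffMap_zero_one_of_isClosed 𝓘(ℝ, V) hs hQ.isClosed hd
  have hsupp : Function.support f ⊆ U ∩ Metric.ball (0:V) (R+1) := by
    intro v hv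
    by_contra h
    exact hv (by simpa using hf0 (by simpa [hs_def] using h))
  refine ⟨f, (f.contMDiff).contDiff, ?_, fun v => hf01 v,
    fun v hv => by simpa using hf1 hv, fun v hv => (hsupp hv).1⟩
  have hts : tsupport f ⊆ Metric.closedBall (0:V) (R+1) := by
    refine (closure_mono (hsupp.trans inter_subset_right)).trans ?_
    exact closure_ball_subset_closedBall
  exact IsCompact.of_isClosed_subset (isCompact_closedBall _ _) (isClosed_closure) hts

/-- Every element of the algebra generated by continuous linear functionals (restricted to
`K`) factors smoothly through a continuous linear map into a finite-dimensional space. -/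
lemma cylRep_of_mem_adjoin {B : Type*} [NormedAddCommGroup B] [NormedSpace ℝ B]
    {K : Set B} {a : C(K, ℝ)}
    (ha : a ∈ Algebra.adjoin ℝ {b : C(K, ℝ) | ∃ ℓ : B →L[ℝ] ℝ, ∀ x : K, b x = ℓ x}) :
    ∃ (V : Type) (_ : NormedAddCommGroup V) (_ : NormedSpace ℝ V),
      FiniteDimensional ℝ V ∧ ∃ (T : B →L[ℝ] V) (g : V → ℝ),
        ContDiff ℝ (⊤ : ℕ∞) g ∧ ∀ x : K, a x = g (T x) := by
  induction ha using Algebra.adjoin_induction with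
  | mem b hb =>
    obtain ⟨ℓ, hℓ⟩ := hb
    exact ⟨ℝ, inferInstance, inferInstance, inferInstance, ℓ, id, contDiff_id,
      fun x => hℓ x⟩
  | algebraMap r =>
    exact ⟨ℝ, inferInstance, inferInstance, inferInstance, 0, fun _ => r, contDiff_const,
      fun x => by simp [Algebra.algebraMap_eq_smul_one]⟩
  | add x y hx hy Px Py =>
    obtain ⟨V₁, i₁, i₁', fd₁, T₁, g₁, hg₁, hr₁⟩ := Px
    obtain ⟨V₂, i₂, i₂', fd₂, T₂, g₂, hg₂, hr₂⟩ := Py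
    letI := i₁; letI := i₁'; letI := i₂; letI := i₂'
    haveI := fd₁; haveI := fd₂
    refine ⟨V₁ × V₂, inferInstance, inferInstance, inferInstance, T₁.prod T₂,
      fun v => g₁ v.1 + g₂ v.2, (hg₁.comp contDiff_fst).add (hg₂.comp contDiff_snd), fun z => ?_⟩
    simp [hr₁ z, hr₂ z]
  | mul x y hx hy Px Py =>
    obtain ⟨V₁, i₁, i₁', fd₁, T₁, g₁, hg₁, hr₁⟩ := Px
    obtain ⟨V₂, i₂, i₂', fd₂, T₂, g₂, hg₂, hr₂⟩ := Py
    letI := i₁; letI := i₁'; letI := i₂; letI := i₂'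
    haveI := fd₁; haveI := fd₂
    refine ⟨V₁ × V₂, inferInstance, inferInstance, inferInstance, T₁.prod T₂,
      fun v => g₁ v.1 * g₂ v.2, (hg₁.comp contDiff_fst).mul (hg₂.comp contDiff_snd), fun z => ?_⟩
    simp [hr₁ z, hr₂ z]

/-- Uniform approximation of a bounded continuous function on a compact set by a smooth
cylindrical function, with a uniform global bound. -/
lemma exists_cyl_approx {B : Type*} [NormedAddCommGroup B] [NormedSpace ℝ B]
    [CompleteSpace B] (h : BoundedContinuousFunction B ℝ) {K : Set B} (hK : IsCompact K)
    {ε₃ : ℝ} (hε₃ : 0 < ε₃) (hε₃1 : ε₃ ≤ 1) :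
    ∃ G : B → ℝ, IsCylindrical G ∧ Continuous G ∧ (∀ x ∈ K, |h x - G x| ≤ ε₃) ∧
      ∀ x, |G x| ≤ ‖h‖ + 1 := by
  haveI : CompactSpace K := isCompact_iff_compactSpace.mp hK
  set Gen : Set C(K, ℝ) := {b : C(K, ℝ) | ∃ ℓ : B →L[ℝ] ℝ, ∀ x : K, b x = ℓ x} with hGen
  set A : Subalgebra ℝ C(K, ℝ) := Algebra.adjoin ℝ Gen with hA
  have hsep : A.SeparatesPoints := by
    intro x y hxy
    have hxy' : (x : B) - y ≠ 0 := sub_ne_zero.2 fun hc => hxy (Subtype.coe_injective hc)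
    obtain ⟨ℓ, -, hℓval⟩ := exists_dual_vector ℝ ((x : B) - (y : B)) (norm_ne_zero_iff.2 hxy')
    have hb : (ContinuousMap.mk (fun z : K => ℓ z)
        (ℓ.continuous.comp continuous_subtype_val)) ∈ Gen := ⟨ℓ, fun _ => rfl⟩
    refine ⟨_, ⟨_, Algebra.subset_adjoin hb, rfl⟩, ?_⟩
    simp only [ContinuousMap.coe_mk]
    intro hc
    have : ℓ ((x : B) - y) = 0 := by rw [map_sub, hc, sub_self]
    rw [hℓval] at this
    exact hxy' (norm_eq_zero.mp (by exact_mod_cast this))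
  obtain ⟨⟨a, haA⟩, hanear⟩ :=
    ContinuousMap.exists_mem_subalgebra_near_continuous_of_separatesPoints A hsep
      (fun x : K => h x) (h.continuous.comp continuous_subtype_val) ε₃ hε₃
  obtain ⟨V, i1, i2, fd, T, g, hg, hrep⟩ := cylRep_of_mem_adjoin haA
  have hQ : IsCompact (T '' K) := hK.image T.continuous
  set U : Set V := {v | |g v| < ‖h‖ + 1} with hU_def
  have hUopen : IsOpen U := by
    have : U = (fun v => |g v|) ⁻¹' Iio (‖h‖ + 1) := rfl
    rw [this]
    exact (continuous_abs.comp hg.continuous).isOpen_preimage _ isOpen_Iio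
  have hQU : T '' K ⊆ U := by
    rintro - ⟨x, hxK, rfl⟩
    have h1 : ‖a ⟨x, hxK⟩ - h x‖ < ε₃ := hanear ⟨x, hxK⟩
    have h2 : g (T x) = a ⟨x, hxK⟩ := (hrep ⟨x, hxK⟩).symm
    have h3 : |h x| ≤ ‖h‖ := by
      simpa [Real.norm_eq_abs] using h.norm_coe_le_norm x
    simp only [hU_def, mem_setOf_eq, h2]
    rw [Real.norm_eq_abs] at h1
    calc |a ⟨x, hxK⟩| ≤ |a ⟨x, hxK⟩ - h x| + |h x| := by
          simpa using abs_add_le (a ⟨x, hxK⟩ - h x) (h x)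
      _ < ε₃ + ‖h‖ := by linarith [abs_nonneg (a ⟨x, hxK⟩ - h x)]
      _ ≤ ‖h‖ + 1 := by linarith
  obtain ⟨χ, hχsm, hχcs, hχ01, hχ1, hχU⟩ := exists_cutoff hQ hUopen hQU
  set g' : V → ℝ := fun v => χ v * g v with hg'
  have hg'sm : ContDiff ℝ (⊤ : ℕ∞) g' := hχsm.mul hg
  have hg'cs : HasCompactSupport g' := by
    have : g' = χ * g := rfl
    rw [this]
    exact hχcs.mul_right
  have hg'bd : ∀ v, |g' v| ≤ ‖h‖ + 1 := by
    intro v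
    by_cases hv : χ v = 0
    · simp [hg', hv]
      positivity
    · have hvU : v ∈ U := hχU v hv
      have h01 := hχ01 v
      calc |χ v * g v| = |χ v| * |g v| := abs_mul _ _
        _ ≤ 1 * |g v| := by
            apply mul_le_mul_of_nonneg_right _ (abs_nonneg _)
            rw [abs_le]; constructor <;> linarith [h01.1, h01.2]
        _ ≤ ‖h‖ + 1 := by rw [one_mul]; exact le_of_lt hvU
  obtain ⟨L, hL⟩ := hg'sm.lipschitzWith_of_hasCompactSupport hg'cs (by simp)
  refine ⟨fun x => g' (T x), ⟨V, i1, i2, fd, T, g', hg'sm, ⟨‖h‖+1, hg'bd⟩, ⟨L, hL⟩, rfl⟩,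
    hg'sm.continuous.comp T.continuous, ?_, fun x => hg'bd (T x)⟩
  intro x hxK
  have hTx : χ (T x) = 1 := hχ1 _ (mem_image_of_mem T hxK)
  have h2 : g (T x) = a ⟨x, hxK⟩ := (hrep ⟨x, hxK⟩).symm
  have h1 : ‖a ⟨x, hxK⟩ - h x‖ < ε₃ := hanear ⟨x, hxK⟩
  rw [Real.norm_eq_abs] at h1
  have hGx : g' (T x) = a ⟨x, hxK⟩ := by rw [hg']; simp [hTx, h2]
  simp only []
  rw [hGx, abs_sub_comm]
  exact le_of_lt h1

open Topology in
/-- If `μ` is a finite Borel measure on a real Banach space `B` concentrated on a σ-compact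
set and `p ∈ [1, ∞)`, then the smooth cylindrical functions are dense in `L^p(μ)`. -/
theorem cylindrical_dense_in_Lp {B : Type*} [NormedAddCommGroup B] [NormedSpace ℝ B]
    [CompleteSpace B] [MeasurableSpace B] [BorelSpace B]
    (μ : Measure B) [IsFiniteMeasure μ]
    (hconc : ∃ S : Set B, IsSigmaCompact S ∧ μ Sᶜ = 0)
    (p : ℝ≥0∞) (hp : 1 ≤ p) (hp' : p ≠ ∞) :
    ∀ f : B → ℝ, MemLp f p μ → ∀ ε : ℝ, 0 < ε →
      ∃ g : B → ℝ, IsCylindrical g ∧ eLpNorm (fun x => f x - g x) p μ < ENNReal.ofReal ε := by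
  obtain ⟨S, hS, hSnull⟩ := hconc
  intro f hf ε hε
  have hp0 : p ≠ 0 := by intro h; rw [h] at hp; exact (not_le.2 zero_lt_one) hp
  have hpt : 0 < p.toReal := ENNReal.toReal_pos hp0 hp'
  have hε4 : (0:ℝ) < ε/4 := by linarith
  have hE4 : ENNReal.ofReal (ε/4) ≠ 0 := by simp [hε4]
  -- Step 1: bounded continuous approximation
  obtain ⟨h, hfh, hhmem⟩ := hf.exists_boundedContinuous_eLpNorm_sub_le hp' hE4
  set M : ℝ := 2*‖h‖ + 1 with hM_def
  have hM1 : (1:ℝ) ≤ M := by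
    have := norm_nonneg h; simp only [hM_def]; linarith
  have hoM0 : ENNReal.ofReal M ≠ 0 := by
    simp only [ne_eq, ENNReal.ofReal_eq_zero, not_le]; linarith
  -- Step 2: choose a compact set whose complement has small measure
  set d : ℝ≥0∞ := ENNReal.ofReal (ε/4) / ENNReal.ofReal M with hd_def
  have hd0 : 0 < d := ENNReal.div_pos hE4 ENNReal.ofReal_ne_top
  have hdtop : d ≠ ∞ := by
    simp only [hd_def, ne_eq, ENNReal.div_eq_top]
    push_neg
    exact ⟨fun _ => hoM0.elim, fun hc => absurd hc ENNReal.ofReal_ne_top⟩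
  set η : ℝ≥0∞ := d ^ p.toReal with hη_def
  have hη0 : 0 < η := ENNReal.rpow_pos hd0 hdtop
  obtain ⟨K, hKc, hKmeas⟩ : ∃ K : Set B, IsCompact K ∧ μ Kᶜ < η := by
    obtain ⟨C, hCc, hCu⟩ := hS
    have hCm : ∀ n, MeasurableSet (accumulate C n) := fun n =>
      (isCompact_accumulate hCc n).isClosed.measurableSet
    have hSm : MeasurableSet S := by
      rw [← hCu]
      exact MeasurableSet.iUnion fun n => (hCc n).isClosed.measurableSet
    set D : ℕ → Set B := fun n => S \ accumulate C n with hD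
    have hDm : ∀ n, MeasurableSet (D n) := fun n => hSm.diff (hCm n)
    have hant : Antitone D := fun m n hmn =>
      diff_subset_diff_right (monotone_accumulate hmn)
    have hInt : ⋂ n, D n = ∅ := by
      rw [hD, ← diff_iUnion, iUnion_accumulate, hCu, diff_self]
    have htend : Tendsto (μ ∘ D) atTop (𝓝 0) := by
      have := tendsto_measure_iInter_atTop (μ := μ)
        (fun n => (hDm n).nullMeasurableSet) hant ⟨0, measure_ne_top μ _⟩
      rwa [hInt, measure_empty] at this
    obtain ⟨n, hn⟩ := (htend.eventually_lt_const hη0).exists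
    refine ⟨accumulate C n, isCompact_accumulate hCc n, lt_of_le_of_lt ?_ hn⟩
    have hsub : (accumulate C n)ᶜ ⊆ D n ∪ Sᶜ := by
      intro x hx
      by_cases hxS : x ∈ S
      · exact Or.inl ⟨hxS, hx⟩
      · exact Or.inr hxS
    calc μ (accumulate C n)ᶜ ≤ μ (D n ∪ Sᶜ) := measure_mono hsub
      _ ≤ μ (D n) + μ Sᶜ := measure_union_le _ _
      _ = (μ ∘ D) n := by rw [hSnull, add_zero]; rfl
  have hKm : MeasurableSet K := hKc.isClosed.measurableSet
  -- Step 3: choose the uniform approximation accuracy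
  set c0 : ℝ≥0∞ := μ univ ^ (1 / p.toReal) with hc0_def
  have hc0top : c0 ≠ ∞ :=
    ENNReal.rpow_ne_top_of_nonneg (by positivity) (measure_ne_top μ univ)
  set ε₃ : ℝ := min 1 (ε/4 / (c0.toReal + 1)) with hε₃_def
  have hc0t1 : (0:ℝ) < c0.toReal + 1 := by positivity
  have hε₃ : 0 < ε₃ := lt_min one_pos (by positivity)
  have hε₃1 : ε₃ ≤ 1 := min_le_left _ _
  -- Step 4: cylindrical approximation of h
  obtain ⟨G, hGcyl, hGcont, hGclose, hGbd⟩ := exists_cyl_approx h hKc hε₃ hε₃1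
  refine ⟨G, hGcyl, ?_⟩
  set φ : B → ℝ := fun x => h x - G x with hφ_def
  have hφcont : Continuous φ := h.continuous.sub hGcont
  -- bound on K
  have bound1 : eLpNorm (K.indicator φ) p μ ≤ ENNReal.ofReal (ε/4) := by
    have e1 : eLpNorm (K.indicator φ) p μ ≤
        eLpNorm (K.indicator (fun _ => ε₃)) p μ := by
      apply eLpNorm_mono
      intro x
      by_cases hx : x ∈ K
      · simp only [indicator_of_mem hx, Real.norm_eq_abs]
        rw [abs_of_nonneg hε₃.le]
        exact hGclose x hx
      · simp [indicator_of_notMem hx, abs_nonneg]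
    have e2 : eLpNorm (K.indicator (fun _ => ε₃)) p μ =
        (‖ε₃‖₊ : ℝ≥0∞) * μ K ^ (1 / p.toReal) :=
      eLpNorm_indicator_const hKm hp0 hp'
    have e3 : (‖ε₃‖₊ : ℝ≥0∞) = ENNReal.ofReal ε₃ := by
      rw [show (‖ε₃‖₊ : ℝ≥0∞) = ENNReal.ofReal ‖ε₃‖ from (ofReal_norm ε₃).symm, Real.norm_eq_abs, abs_of_nonneg hε₃.le]
    have e4 : μ K ^ (1 / p.toReal) ≤ c0 :=
      ENNReal.rpow_le_rpow (measure_mono (subset_univ _)) (by positivity)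
    have e5 : ENNReal.ofReal ε₃ * c0 ≤ ENNReal.ofReal (ε/4) := by
      have hc0le : c0 ≤ ENNReal.ofReal (c0.toReal + 1) := by
        conv_lhs => rw [← ENNReal.ofReal_toReal hc0top]
        exact ENNReal.ofReal_le_ofReal (by linarith)
      calc ENNReal.ofReal ε₃ * c0
          ≤ ENNReal.ofReal (ε/4 / (c0.toReal + 1)) * ENNReal.ofReal (c0.toReal + 1) :=
            mul_le_mul' (ENNReal.ofReal_le_ofReal (min_le_right _ _)) hc0le
        _ = ENNReal.ofReal (ε/4 / (c0.toReal + 1) * (c0.toReal + 1)) :=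
            (ENNReal.ofReal_mul (by positivity)).symm
        _ = ENNReal.ofReal (ε/4) := by rw [div_mul_cancel₀ _ (ne_of_gt hc0t1)]
    calc eLpNorm (K.indicator φ) p μ ≤ (‖ε₃‖₊ : ℝ≥0∞) * μ K ^ (1 / p.toReal) := e1.trans e2.le
      _ ≤ ENNReal.ofReal ε₃ * c0 := by rw [e3]; exact mul_le_mul_right e4 _
      _ ≤ ENNReal.ofReal (ε/4) := e5
  -- bound off K
  have bound2 : eLpNorm (Kᶜ.indicator φ) p μ ≤ ENNReal.ofReal (ε/4) := by
    have e1 : eLpNorm (Kᶜ.indicator φ) p μ ≤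
        eLpNorm (Kᶜ.indicator (fun _ => M)) p μ := by
      apply eLpNorm_mono
      intro x
      by_cases hx : x ∈ Kᶜ
      · simp only [indicator_of_mem hx, Real.norm_eq_abs]
        rw [abs_of_nonneg (by linarith : (0:ℝ) ≤ M)]
        have h1 : |h x| ≤ ‖h‖ := by
          simpa [Real.norm_eq_abs] using h.norm_coe_le_norm x
        have h2 := hGbd x
        calc |h x - G x| ≤ |h x| + |G x| := abs_sub _ _
          _ ≤ ‖h‖ + (‖h‖ + 1) := add_le_add h1 h2
          _ = M := by rw [hM_def]; ring
      · simp [indicator_of_notMem hx, abs_nonneg]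
    have e2 : eLpNorm (Kᶜ.indicator (fun _ => M)) p μ =
        (‖M‖₊ : ℝ≥0∞) * μ Kᶜ ^ (1 / p.toReal) :=
      eLpNorm_indicator_const hKm.compl hp0 hp'
    have e3 : (‖M‖₊ : ℝ≥0∞) = ENNReal.ofReal M := by
      rw [show (‖M‖₊ : ℝ≥0∞) = ENNReal.ofReal ‖M‖ from (ofReal_norm M).symm, Real.norm_eq_abs, abs_of_nonneg (by linarith)]
    have e4 : μ Kᶜ ^ (1 / p.toReal) ≤ d := by
      have : μ Kᶜ ^ (1 / p.toReal) ≤ η ^ (1 / p.toReal) :=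
        ENNReal.rpow_le_rpow hKmeas.le (by positivity)
      refine this.trans_eq ?_
      rw [hη_def, ← ENNReal.rpow_mul, mul_one_div, div_self (ne_of_gt hpt),
        ENNReal.rpow_one]
    have e5 : ENNReal.ofReal M * d = ENNReal.ofReal (ε/4) := by
      rw [hd_def]
      exact ENNReal.mul_div_cancel hoM0 ENNReal.ofReal_ne_top
    calc eLpNorm (Kᶜ.indicator φ) p μ ≤ (‖M‖₊ : ℝ≥0∞) * μ Kᶜ ^ (1 / p.toReal) := e1.trans e2.le
      _ ≤ ENNReal.ofReal M * d := by rw [e3]; exact mul_le_mul_right e4 _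
      _ = ENNReal.ofReal (ε/4) := e5
  -- combine
  have hφsplit : φ = K.indicator φ + Kᶜ.indicator φ := by
    funext x
    by_cases hx : x ∈ K
    · have hx' : x ∉ Kᶜ := fun hc => hc hx
      simp [indicator_of_mem hx, indicator_of_notMem hx']
    · simp [indicator_of_notMem hx, indicator_of_mem (mem_compl hx)]
  have hφbound : eLpNorm φ p μ ≤ ENNReal.ofReal (ε/4) + ENNReal.ofReal (ε/4) := by
    calc eLpNorm φ p μ = eLpNorm (K.indicator φ + Kᶜ.indicator φ) p μ := by rw [← hφsplit]
      _ ≤ eLpNorm (K.indicator φ) p μ + eLpNorm (Kᶜ.indicator φ) p μ :=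
          eLpNorm_add_le
            (hφcont.aestronglyMeasurable.indicator hKm)
            (hφcont.aestronglyMeasurable.indicator hKm.compl) hp
      _ ≤ ENNReal.ofReal (ε/4) + ENNReal.ofReal (ε/4) := add_le_add bound1 bound2
  have hsplit : (fun x => f x - G x) = (f - ⇑h) + φ := by
    funext x
    simp only [Pi.add_apply, Pi.sub_apply, hφ_def]
    ring
  calc eLpNorm (fun x => f x - G x) p μ
      ≤ eLpNorm (f - ⇑h) p μ + eLpNorm φ p μ := by
        rw [hsplit]
        exact eLpNorm_add_le (hf.1.sub h.continuous.aestronglyMeasurable)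
          hφcont.aestronglyMeasurable hp
    _ ≤ ENNReal.ofReal (ε/4) + (ENNReal.ofReal (ε/4) + ENNReal.ofReal (ε/4)) :=
        add_le_add hfh hφbound
    _ = ENNReal.ofReal (ε/4 + (ε/4 + ε/4)) := by
        rw [ENNReal.ofReal_add hε4.le (by linarith), ENNReal.ofReal_add hε4.le hε4.le]
    _ < ENNReal.ofReal ε := by
        rw [ENNReal.ofReal_lt_ofReal_iff hε]
        linarith
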